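/- arXiv:0904.1024 — 2 statements merged into one kernel-verified Lean document; each statement's English description precedes it below -/
import Mathlib

section
/- The unordered configuration space B(S^n,2) is the total space of an open n-disc bundle over RP^n; in particular B(S^n,2) is homotopy equivalent to RP^n. -/
noncomputable section

/-- The setoid identifying tuples up to permutation. -/
def permSetoid (X : Type) (n : ℕ) : Setoid (Fin n → X) where
  r f g := ∃ σ : Equiv.Perm (Fin n), f ∘ σ = g
  iseqv := by
    refine ⟨fun f => ⟨1, rfl⟩, ?_, ?_⟩
    · rintro f g ⟨σ, rfl⟩
      exact ⟨σ⁻¹, by funext x; simp⟩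
    · rintro f g h ⟨σ, rfl⟩ ⟨τ, rfl⟩
      exact ⟨σ * τ, by funext x; simp [Equiv.Perm.coe_mul]⟩

/-- The `n`-th symmetric product `SP^n(X) = X^n / S_n`. -/
def SP (X : Type) [TopologicalSpace X] (n : ℕ) : Type := Quotient (permSetoid X n)

instance (X : Type) [TopologicalSpace X] (n : ℕ) : TopologicalSpace (SP X n) :=
  instTopologicalSpaceQuotient

/-- The setoid identifying injective tuples up to permutation. -/
def injSetoid (X : Type) (n : ℕ) : Setoid {f : Fin n → X // Function.Injective f} where
  r f g := ∃ σ : Equiv.Perm (Fin n), f.1 ∘ σ = g.1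
  iseqv := by
    refine ⟨fun f => ⟨1, rfl⟩, ?_, ?_⟩
    · rintro ⟨f, hf⟩ ⟨g, hg⟩ ⟨σ, h⟩
      exact ⟨σ⁻¹, by rw [← h]; funext x; simp⟩
    · rintro ⟨f, hf⟩ ⟨g, hg⟩ ⟨u, hu⟩ ⟨σ, h⟩ ⟨τ, h'⟩
      exact ⟨σ * τ, by rw [← h', ← h]; funext x; simp [Equiv.Perm.coe_mul]⟩

/-- The unordered configuration space (braid space) `B(X,n)` of `n` pairwise distinct
points in `X`, as the quotient of the ordered configuration space by the symmetric group. -/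
def UConf (X : Type) [TopologicalSpace X] (n : ℕ) : Type := Quotient (injSetoid X n)

instance (X : Type) [TopologicalSpace X] (n : ℕ) : TopologicalSpace (UConf X n) :=
  instTopologicalSpaceQuotient
/-- The antipodal setoid on the unit sphere of `ℝ^{n+1}`. -/
def antipodalSetoid (n : ℕ) : Setoid (Metric.sphere (0 : EuclideanSpace ℝ (Fin (n + 1))) 1) where
  r x y := (x : EuclideanSpace ℝ (Fin (n + 1))) = y ∨
    (x : EuclideanSpace ℝ (Fin (n + 1))) = -(y : EuclideanSpace ℝ (Fin (n + 1)))
  iseqv := by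
    refine ⟨fun x => Or.inl rfl, ?_, ?_⟩
    · rintro x y (h | h)
      · exact Or.inl h.symm
      · exact Or.inr (by rw [h, neg_neg])
    · rintro x y z (h1 | h1) (h2 | h2)
      · exact Or.inl (h1.trans h2)
      · exact Or.inr (h1.trans h2)
      · exact Or.inr (by rw [h1, h2])
      · exact Or.inl (by rw [h1, h2, neg_neg])

/-- Real projective space `ℝP^n` as the quotient of the sphere by the antipodal action. -/
def RP (n : ℕ) : Type := Quotient (antipodalSetoid n)

instance (n : ℕ) : TopologicalSpace (RP n) := instTopologicalSpaceQuotient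

set_option maxHeartbeats 1000000

/- ################################################################# -/
/- Auxiliary development                                              -/
/- ################################################################# -/

open scoped RealInnerProductSpace
open Metric Module Function Topology

namespace BraidBundle

variable {n : ℕ}

abbrev E (n : ℕ) := EuclideanSpace ℝ (Fin (n+1))
abbrev F (n : ℕ) := EuclideanSpace ℝ (Fin n)
abbrev Sph (n : ℕ) := Metric.sphere (0 : E n) 1
abbrev Cfg (n : ℕ) := {f : Fin 2 → ↥(Sph n) // Function.Injective f}

def πC : Cfg n → UConf (↥(Sph n)) 2 := Quotient.mk _
def πS : Sph n → RP n := Quotient.mk _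

lemma sph_norm (x : Sph n) : ‖(x : E n)‖ = 1 := mem_sphere_zero_iff_norm.mp x.2

lemma sph_mem {x : E n} (h : ‖x‖ = 1) : x ∈ Sph n := mem_sphere_zero_iff_norm.mpr h

lemma perm2 (σ : Equiv.Perm (Fin 2)) : σ = Equiv.refl _ ∨ σ = Equiv.swap 0 1 := by
  revert σ; decide

/-! ### configurations -/

def Xc (f : Cfg n) : E n := f.1 0
def Yc (f : Cfg n) : E n := f.1 1
def midf (f : Cfg n) : E n := (2:ℝ)⁻¹ • (Xc f + Yc f)
def dir (f : Cfg n) : E n := ‖Xc f - Yc f‖⁻¹ • (Xc f - Yc f)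

lemma normX (f : Cfg n) : ‖Xc f‖ = 1 := sph_norm _
lemma normY (f : Cfg n) : ‖Yc f‖ = 1 := sph_norm _

lemma Xc_ne_Yc (f : Cfg n) : Xc f ≠ Yc f := by
  intro h
  have h2 : f.1 0 = f.1 1 := Subtype.ext h
  exact absurd (f.2 h2) (by decide)

lemma sub_ne (f : Cfg n) : Xc f - Yc f ≠ 0 := sub_ne_zero.mpr (Xc_ne_Yc f)

lemma norm_sub_pos (f : Cfg n) : 0 < ‖Xc f - Yc f‖ := norm_pos_iff.mpr (sub_ne f)

lemma inner_XY_lt (f : Cfg n) : ⟪Xc f, Yc f⟫ < 1 := by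
  have h := norm_sub_sq_real (Xc f) (Yc f)
  have h2 : 0 < ‖Xc f - Yc f‖ ^ 2 := pow_pos (norm_sub_pos f) 2
  nlinarith [normX f, normY f]

lemma norm_mid_lt (f : Cfg n) : ‖midf f‖ < 1 := by
  have h := norm_add_sq_real (Xc f) (Yc f)
  have ht := inner_XY_lt f
  have h3 : ‖midf f‖ = 2⁻¹ * ‖Xc f + Yc f‖ := by
    rw [midf, norm_smul]; norm_num
  nlinarith [norm_nonneg (Xc f + Yc f), normX f, normY f]

lemma dir_norm (f : Cfg n) : ‖dir f‖ = 1 := by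
  rw [dir, norm_smul, Real.norm_eq_abs, abs_of_pos (inv_pos.mpr (norm_sub_pos f))]
  exact inv_mul_cancel₀ (ne_of_gt (norm_sub_pos f))

lemma mid_inner_dir (f : Cfg n) : ⟪midf f, dir f⟫ = 0 := by
  have h : ⟪Xc f + Yc f, Xc f - Yc f⟫ = 0 := by
    rw [inner_sub_right, inner_add_left, inner_add_left, real_inner_self_eq_norm_sq,
      real_inner_self_eq_norm_sq, normX f, normY f, real_inner_comm (Yc f) (Xc f)]
    ring
  rw [midf, dir, real_inner_smul_left, real_inner_smul_right, h]
  ring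

def dirS (f : Cfg n) : Sph n := ⟨dir f, sph_mem (dir_norm f)⟩

/-! ### the two-point configuration attached to `(m, w)` -/

def CfgCond (m w : E n) : Prop := ‖w‖ = 1 ∧ ⟪m, w⟫ = 0 ∧ ‖m‖ < 1

def rr (m : E n) : ℝ := Real.sqrt (1 - ‖m‖^2)

lemma one_sub_sq_pos {m : E n} (hm : ‖m‖ < 1) : 0 < 1 - ‖m‖^2 := by
  nlinarith [norm_nonneg m]

lemma rr_pos {m : E n} (hm : ‖m‖ < 1) : 0 < rr m :=
  Real.sqrt_pos.mpr (one_sub_sq_pos hm)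

lemma rr_sq {m : E n} (hm : ‖m‖ < 1) : rr m ^ 2 = 1 - ‖m‖^2 :=
  Real.sq_sqrt (le_of_lt (one_sub_sq_pos hm))

lemma cfg_norm_add {m w : E n} (h : CfgCond m w) : ‖m + rr m • w‖ = 1 := by
  obtain ⟨hw, hmw, hm⟩ := h
  have h2 : ‖m + rr m • w‖^2 = 1 := by
    rw [norm_add_sq_real, real_inner_smul_right, hmw, norm_smul, Real.norm_eq_abs,
      abs_of_pos (rr_pos hm), hw]
    have := rr_sq hm
    nlinarith
  nlinarith [norm_nonneg (m + rr m • w)]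

lemma cfg_norm_sub {m w : E n} (h : CfgCond m w) : ‖m - rr m • w‖ = 1 := by
  obtain ⟨hw, hmw, hm⟩ := h
  have h2 : ‖m - rr m • w‖^2 = 1 := by
    rw [norm_sub_sq_real, real_inner_smul_right, hmw, norm_smul, Real.norm_eq_abs,
      abs_of_pos (rr_pos hm), hw]
    have := rr_sq hm
    nlinarith
  nlinarith [norm_nonneg (m - rr m • w)]

lemma cfg_ne {m w : E n} (h : CfgCond m w) : m + rr m • w ≠ m - rr m • w := by
  intro he
  rw [sub_eq_add_neg] at he
  have h1 : rr m • w = -(rr m • w) := add_left_cancel he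
  have h2 : rr m • w = 0 := by
    have h3 : (2:ℝ) • (rr m • w) = 0 := by
      rw [two_smul]
      rw [eq_neg_iff_add_eq_zero] at h1
      exact h1
    rcases smul_eq_zero.mp h3 with h4 | h4
    · norm_num at h4
    · exact h4
  have h3 : ‖rr m • w‖ = rr m := by
    rw [norm_smul, Real.norm_eq_abs, abs_of_pos (rr_pos h.2.2), h.1, mul_one]
  rw [h2, norm_zero] at h3
  exact absurd h3.symm (ne_of_gt (rr_pos h.2.2))

def cfgAux (m w : E n) (h : CfgCond m w) : Cfg n :=
  ⟨![⟨m + rr m • w, sph_mem (cfg_norm_add h)⟩, ⟨m - rr m • w, sph_mem (cfg_norm_sub h)⟩], by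
    intro i j hij
    have hne : (⟨m + rr m • w, sph_mem (cfg_norm_add h)⟩ : ↥(Sph n)) ≠
        ⟨m - rr m • w, sph_mem (cfg_norm_sub h)⟩ := fun hc => cfg_ne h (congrArg Subtype.val hc)
    fin_cases i <;> fin_cases j <;> simp_all⟩

def junkCfg (n : ℕ) : Cfg n :=
  cfgAux 0 (EuclideanSpace.single 0 1)
    ⟨by simp [EuclideanSpace.norm_single], by simp, by simp⟩

open scoped Classical in
def cfg (m w : E n) : Cfg n := if h : CfgCond m w then cfgAux m w h else junkCfg n

lemma cfg_pos {m w : E n} (h : CfgCond m w) : cfg m w = cfgAux m w h := by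
  unfold cfg; exact dif_pos h

lemma cfgAux_X {m w : E n} (h : CfgCond m w) : Xc (cfgAux m w h) = m + rr m • w := rfl
lemma cfgAux_Y {m w : E n} (h : CfgCond m w) : Yc (cfgAux m w h) = m - rr m • w := rfl

lemma mid_cfgAux {m w : E n} (h : CfgCond m w) : midf (cfgAux m w h) = m := by
  rw [midf, cfgAux_X h, cfgAux_Y h]
  module

lemma dir_cfgAux {m w : E n} (h : CfgCond m w) : dir (cfgAux m w h) = w := by
  have hXY : Xc (cfgAux m w h) - Yc (cfgAux m w h) = (2 * rr m) • w := by
    rw [cfgAux_X h, cfgAux_Y h]; module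
  have hpos : 0 < 2 * rr m := mul_pos two_pos (rr_pos h.2.2)
  rw [dir, hXY, norm_smul, Real.norm_eq_abs, abs_of_pos hpos, h.1, mul_one, smul_smul,
    inv_mul_cancel₀ (ne_of_gt hpos), one_smul]

/-! ### eta and swap lemmas -/

lemma cfgCond_mid_dir (f : Cfg n) : CfgCond (midf f) (dir f) :=
  ⟨dir_norm f, mid_inner_dir f, norm_mid_lt f⟩

lemma rr_mid (f : Cfg n) : rr (midf f) = 2⁻¹ * ‖Xc f - Yc f‖ := by
  have ht := inner_XY_lt f
  have h1 : ‖Xc f + Yc f‖^2 = 2 + 2 * ⟪Xc f, Yc f⟫ := by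
    rw [norm_add_sq_real]; rw [normX f, normY f]; ring
  have h2 : ‖Xc f - Yc f‖^2 = 2 - 2 * ⟪Xc f, Yc f⟫ := by
    rw [norm_sub_sq_real]; rw [normX f, normY f]; ring
  have h3 : ‖midf f‖ = 2⁻¹ * ‖Xc f + Yc f‖ := by
    rw [midf, norm_smul]; norm_num
  have h4 : 1 - ‖midf f‖^2 = (2⁻¹ * ‖Xc f - Yc f‖)^2 := by
    rw [h3]; nlinarith
  rw [rr, h4, Real.sqrt_sq (by positivity)]

lemma cfg_eta (f : Cfg n) : cfg (midf f) (dir f) = f := by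
  rw [cfg_pos (cfgCond_mid_dir f)]
  have hr : rr (midf f) • dir f = (2:ℝ)⁻¹ • (Xc f - Yc f) := by
    rw [rr_mid f, dir, smul_smul]
    congr 1
    rw [mul_assoc, mul_inv_cancel₀ (ne_of_gt (norm_sub_pos f)), mul_one]
  apply Subtype.ext
  funext i
  fin_cases i
  · apply Subtype.ext
    show midf f + rr (midf f) • dir f = Xc f
    rw [hr, midf]; module
  · apply Subtype.ext
    show midf f - rr (midf f) • dir f = Yc f
    rw [hr, midf]; module

def swapC (f : Cfg n) : Cfg n := ⟨f.1 ∘ Equiv.swap 0 1, f.2.comp (Equiv.swap 0 1).injective⟩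

lemma Xc_swap (f : Cfg n) : Xc (swapC f) = Yc f := by
  show ((f.1 (Equiv.swap 0 1 0) : ↥(Sph n)) : E n) = _
  rw [Equiv.swap_apply_left]; rfl

lemma Yc_swap (f : Cfg n) : Yc (swapC f) = Xc f := by
  show ((f.1 (Equiv.swap 0 1 1) : ↥(Sph n)) : E n) = _
  rw [Equiv.swap_apply_right]; rfl

lemma mid_swap (f : Cfg n) : midf (swapC f) = midf f := by
  rw [midf, midf, Xc_swap, Yc_swap]; module

lemma dir_swap (f : Cfg n) : dir (swapC f) = - dir f := by
  rw [dir, dir, Xc_swap, Yc_swap, show Yc f - Xc f = -(Xc f - Yc f) by module, norm_neg,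
    smul_neg]

lemma eq_or_swap {f g : Cfg n} (h : ∃ σ : Equiv.Perm (Fin 2), f.1 ∘ σ = g.1) :
    g = f ∨ g = swapC f := by
  obtain ⟨σ, hσ⟩ := h
  rcases perm2 σ with rfl | rfl
  · left; exact Subtype.ext (by simpa using hσ.symm)
  · right; exact Subtype.ext hσ.symm

lemma relC {f g : Cfg n} (σ : Equiv.Perm (Fin 2)) (h : f.1 ∘ σ = g.1) : πC f = πC g :=
  @Quotient.sound _ (injSetoid _ 2) f g ⟨σ, h⟩

lemma relS {a b : Sph n} (h : (a : E n) = b ∨ (a : E n) = -(b : E n)) : πS a = πS b :=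
  @Quotient.sound _ (antipodalSetoid n) a b h

lemma exactC {f g : Cfg n} (h : πC f = πC g) : ∃ σ : Equiv.Perm (Fin 2), f.1 ∘ σ = g.1 :=
  Quotient.exact h

lemma exactS {a b : Sph n} (h : πS a = πS b) : (a : E n) = b ∨ (a : E n) = -(b : E n) :=
  Quotient.exact h

lemma swapC_swapC (f : Cfg n) : swapC (swapC f) = f := by
  apply Subtype.ext
  funext i
  simp [swapC]

lemma rel_swap (f : Cfg n) : πC (swapC f) = πC f := by
  refine relC (Equiv.swap 0 1) ?_
  funext i
  simp [swapC]

lemma cfg_neg (m w : E n) : πC (cfg m (-w)) = πC (cfg m w) := by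
  have hc : CfgCond m (-w) ↔ CfgCond m w := by
    unfold CfgCond
    rw [norm_neg, inner_neg_right, neg_eq_zero]
  by_cases h : CfgCond m w
  · rw [cfg_pos h, cfg_pos (hc.mpr h)]
    have hsw : cfgAux m (-w) (hc.mpr h) = swapC (cfgAux m w h) := by
      apply Subtype.ext
      funext i
      fin_cases i <;> apply Subtype.ext <;>
        simp [cfgAux, swapC, Equiv.swap_apply_left, Equiv.swap_apply_right, smul_neg,
          sub_neg_eq_add, sub_eq_add_neg]
    rw [hsw]
    exact rel_swap _
  · unfold cfg
    rw [dif_neg h, dif_neg (fun hh => h (hc.mp hh))]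

/-! ### the projection map -/

def pmap (n : ℕ) : UConf (↥(Sph n)) 2 → RP n :=
  Quotient.lift (fun f => πS (dirS f)) (by
    rintro f g ⟨σ, hσ⟩
    rcases eq_or_swap ⟨σ, hσ⟩ with rfl | rfl
    · rfl
    · refine relS (Or.inr ?_)
      show dir f = -(dir (swapC f))
      rw [dir_swap, neg_neg])

lemma pmap_mk (f : Cfg n) : pmap n (πC f) = πS (dirS f) := rfl

/-! ### continuity basics -/

lemma cont_Xc : Continuous (fun f : Cfg n => Xc f) :=
  continuous_subtype_val.comp ((continuous_apply 0).comp continuous_subtype_val)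

lemma cont_Yc : Continuous (fun f : Cfg n => Yc f) :=
  continuous_subtype_val.comp ((continuous_apply 1).comp continuous_subtype_val)

lemma cont_mid : Continuous (fun f : Cfg n => midf f) :=
  continuous_const.fun_smul (cont_Xc.add cont_Yc)

lemma cont_dir : Continuous (fun f : Cfg n => dir f) := by
  have hsub : Continuous (fun f : Cfg n => Xc f - Yc f) := cont_Xc.sub cont_Yc
  exact (hsub.norm.inv₀ (fun f => ne_of_gt (norm_sub_pos f))).smul hsub

lemma cont_dirS : Continuous (fun f : Cfg n => dirS f) :=
  cont_dir.subtype_mk _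

lemma cont_pmap (n : ℕ) : Continuous (pmap n) :=
  Continuous.quotient_lift ((continuous_quotient_mk').comp cont_dirS) _

lemma cont_πC : Continuous (πC (n := n)) := continuous_quotient_mk'
lemma cont_πS : Continuous (πS (n := n)) := continuous_quotient_mk'

lemma isQuotientMap_πC : IsQuotientMap (πC (n := n)) :=
  @isQuotientMap_quotient_mk' _ _ (injSetoid _ 2)
lemma isQuotientMap_πS : IsQuotientMap (πS (n := n)) :=
  @isQuotientMap_quotient_mk' _ _ (antipodalSetoid n)

/-! ### openness of the quotient maps -/

def negS (x : Sph n) : Sph n := ⟨-(x : E n), sph_mem (by rw [norm_neg, sph_norm])⟩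

lemma cont_negS : Continuous (negS (n := n)) :=
  (continuous_subtype_val.neg).subtype_mk _

lemma cont_swapC : Continuous (swapC (n := n)) := by
  apply Continuous.subtype_mk
  exact continuous_pi fun i => (continuous_apply _).comp continuous_subtype_val

lemma isOpenMap_πS : IsOpenMap (πS (n := n)) := by
  intro O hO
  rw [← isQuotientMap_πS.isOpen_preimage]
  have hpre : πS ⁻¹' (πS '' O) = O ∪ negS ⁻¹' O := by
    ext x
    constructor
    · rintro ⟨y, hy, hxy⟩
      rcases exactS hxy with h | h
      · left; rwa [show y = x from Subtype.ext h] at hy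
      · right
        show negS x ∈ O
        rwa [show y = negS x from Subtype.ext h] at hy
    · rintro (h | h)
      · exact ⟨x, h, rfl⟩
      · exact ⟨negS x, h, relS (Or.inr (by simp [negS]))⟩
  rw [hpre]
  exact hO.union (hO.preimage cont_negS)

lemma isOpenMap_πC : IsOpenMap (πC (n := n)) := by
  intro O hO
  rw [← isQuotientMap_πC.isOpen_preimage]
  have hpre : πC ⁻¹' (πC '' O) = O ∪ swapC ⁻¹' O := by
    ext x
    constructor
    · rintro ⟨y, hy, hxy⟩
      rcases eq_or_swap (exactC hxy) with rfl | rfl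
      · left; exact hy
      · right
        show swapC (swapC y) ∈ O
        rw [swapC_swapC]
        exact hy
    · rintro (h | h)
      · exact ⟨x, h, rfl⟩
      · refine ⟨swapC x, h, ?_⟩
        exact rel_swap x
  rw [hpre]
  exact hO.union (hO.preimage cont_swapC)

lemma surjective_πC : Function.Surjective (πC (n := n)) := Quotient.mk_surjective
lemma surjective_πS : Function.Surjective (πS (n := n)) := Quotient.mk_surjective

/-! ### restriction of open quotient maps -/

lemma restrict_isQuotientMap {X Y : Type*} [TopologicalSpace X] [TopologicalSpace Y] {f : X → Y}
    (hc : Continuous f) (ho : IsOpenMap f) (hs : Function.Surjective f) (V : Set Y) :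
    IsQuotientMap (fun x : ↥(f ⁻¹' V) => (⟨f x.1, x.2⟩ : ↥V)) := by
  apply IsOpenMap.isQuotientMap
  · intro O hO
    obtain ⟨O', hO', rfl⟩ := isOpen_induced_iff.mp hO
    rw [isOpen_induced_iff]
    refine ⟨f '' O', ho _ hO', ?_⟩
    ext y
    constructor
    · rintro ⟨x, hx1, hx2⟩
      refine ⟨⟨x, ?_⟩, hx1, Subtype.ext hx2⟩
      show f x ∈ V
      rw [hx2]
      exact y.2
    · rintro ⟨x, hxO, rfl⟩
      exact ⟨x.1, hxO, rfl⟩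
  · exact (hc.comp continuous_subtype_val).subtype_mk _
  · rintro ⟨y, hy⟩
    obtain ⟨x, rfl⟩ := hs y
    exact ⟨⟨x, hy⟩, rfl⟩

/-! ### chart data -/

section Chart

variable (v : Sph n)

def vE : E n := v

lemma hv1 : ‖vE v‖ = 1 := sph_norm v
lemma hvne : vE v ≠ 0 := by
  intro h
  have := hv1 v
  rw [h, norm_zero] at this
  norm_num at this

lemma inner_vv : ⟪vE v, vE v⟫ = 1 := by
  rw [real_inner_self_eq_norm_sq, hv1 v]; norm_num

def Kv : Submodule ℝ (E n) := (ℝ ∙ (vE v))ᗮ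

instance factDim : Fact (finrank ℝ (E n) = n + 1) := ⟨finrank_euclideanSpace_fin⟩

def ψv : (Kv v) ≃ₗᵢ[ℝ] F n :=
  (OrthonormalBasis.fromOrthogonalSpanSingleton n (hvne v)).repr

lemma mem_Kv {u : E n} (h : ⟪vE v, u⟫ = 0) : u ∈ Kv v :=
  Submodule.mem_orthogonal_singleton_iff_inner_right.mpr h

lemma inner_of_mem_Kv {u : E n} (h : u ∈ Kv v) : ⟪u, vE v⟫ = 0 :=
  Submodule.mem_orthogonal_singleton_iff_inner_left.mp h

/-- expansion of the open ball to the whole space -/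
def Mv (m : E n) : E n := (1 - ‖m‖)⁻¹ • m

def ζv (m : E n) : E n := Mv m - ⟪Mv m, vE v⟫ • vE v

def Φv (m : E n) : F n :=
  (1 + ‖ζv v m‖)⁻¹ • ψv v (Submodule.orthogonalProjection (Kv v) (ζv v m))

def ζb (b : F n) : E n := (1 - ‖b‖)⁻¹ • (((ψv v).symm b : Kv v) : E n)

def ΨMv (w : E n) (b : F n) : E n :=
  ζb v b - (⟪ζb v b, w⟫ / ⟪vE v, w⟫) • vE v

def Ψv (w : E n) (b : F n) : E n := (1 + ‖ΨMv v w b‖)⁻¹ • ΨMv v w b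

/-! #### contraction/expansion lemmas -/

lemma norm_contract (M : E n) : ‖(1 + ‖M‖)⁻¹ • M‖ = (1 + ‖M‖)⁻¹ * ‖M‖ := by
  rw [norm_smul, Real.norm_eq_abs, abs_of_pos (inv_pos.mpr (by positivity))]

lemma norm_contract_lt (M : E n) : ‖(1 + ‖M‖)⁻¹ • M‖ < 1 := by
  rw [norm_contract]
  rw [inv_mul_lt_iff₀ (by positivity)]
  linarith [norm_nonneg M]

lemma Mv_contract (M : E n) : Mv ((1 + ‖M‖)⁻¹ • M) = M := by
  have hpos : (0:ℝ) < 1 + ‖M‖ := by positivity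
  rw [Mv, norm_contract]
  have h1 : (1 : ℝ) - (1 + ‖M‖)⁻¹ * ‖M‖ = (1 + ‖M‖)⁻¹ := by
    field_simp; ring
  rw [h1, inv_inv, smul_smul, mul_inv_cancel₀ (ne_of_gt hpos), one_smul]

lemma contract_Mv {m : E n} (hm : ‖m‖ < 1) : (1 + ‖Mv m‖)⁻¹ • Mv m = m := by
  have hpos : (0:ℝ) < 1 - ‖m‖ := by linarith
  have hn : ‖Mv m‖ = (1 - ‖m‖)⁻¹ * ‖m‖ := by
    rw [Mv, norm_smul, Real.norm_eq_abs, abs_of_pos (inv_pos.mpr hpos)]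
  have h1 : 1 + ‖Mv m‖ = (1 - ‖m‖)⁻¹ := by
    rw [hn]; field_simp; ring
  rw [h1, inv_inv, Mv, smul_smul, mul_inv_cancel₀ (ne_of_gt hpos), one_smul]

lemma ζv_mem (m : E n) : ζv v m ∈ Kv v := by
  apply mem_Kv
  rw [ζv, inner_sub_right, real_inner_smul_right, inner_vv v, mul_one,
    real_inner_comm (vE v) (Mv m), sub_self]

lemma ζb_mem (b : F n) : ζb v b ∈ Kv v := by
  rw [ζb]
  exact Submodule.smul_mem _ _ (SetLike.coe_mem _)

lemma inner_ζb_v (b : F n) : ⟪ζb v b, vE v⟫ = 0 := inner_of_mem_Kv v (ζb_mem v b)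

lemma Psi_inner (w : E n) (b : F n) (hw : ⟪vE v, w⟫ ≠ 0) : ⟪Ψv v w b, w⟫ = 0 := by
  have h : ⟪ΨMv v w b, w⟫ = 0 := by
    rw [ΨMv, inner_sub_left, real_inner_smul_left, div_mul_cancel₀ _ hw, sub_self]
  rw [Ψv, real_inner_smul_left, h, mul_zero]

lemma Psi_norm_lt (w : E n) (b : F n) : ‖Ψv v w b‖ < 1 := norm_contract_lt _

lemma Psi_neg (w : E n) (b : F n) : Ψv v (-w) b = Ψv v w b := by
  have h : ΨMv v (-w) b = ΨMv v w b := by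
    rw [ΨMv, ΨMv, inner_neg_right, inner_neg_right, neg_div_neg_eq]
  rw [Ψv, Ψv, h]

lemma norm_ζb (b : F n) (hb : ‖b‖ < 1) : ‖ζb v b‖ = (1 - ‖b‖)⁻¹ * ‖b‖ := by
  rw [ζb, norm_smul, Real.norm_eq_abs, abs_of_pos (inv_pos.mpr (by linarith))]
  congr 1
  rw [Submodule.norm_coe]
  exact (ψv v).symm.norm_map b

lemma Phi_norm_lt (m : E n) : ‖Φv v m‖ < 1 := by
  have hproj : ‖(Submodule.orthogonalProjection (Kv v) (ζv v m) : Kv v)‖ ≤ ‖ζv v m‖ := by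
    calc ‖(Submodule.orthogonalProjection (Kv v) (ζv v m) : Kv v)‖
        ≤ ‖Submodule.orthogonalProjection (Kv v)‖ * ‖ζv v m‖ := ContinuousLinearMap.le_opNorm _ _
      _ ≤ 1 * ‖ζv v m‖ := by
          apply mul_le_mul_of_nonneg_right (Submodule.orthogonalProjectionOnto_norm_le _) (norm_nonneg _)
      _ = ‖ζv v m‖ := one_mul _
  rw [Φv, norm_smul, Real.norm_eq_abs, abs_of_pos (inv_pos.mpr (by positivity)),
    (ψv v).norm_map]
  have hpos : (0:ℝ) < 1 + ‖ζv v m‖ := by positivity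
  rw [inv_mul_lt_iff₀ hpos, mul_one]
  linarith

lemma Phi_Psi (w : E n) (b : F n) (hw : ⟪vE v, w⟫ ≠ 0) (hb : ‖b‖ < 1) :
    Φv v (Ψv v w b) = b := by
  have hb1 : (0:ℝ) < 1 - ‖b‖ := by linarith
  have h1 : Mv (Ψv v w b) = ΨMv v w b := Mv_contract _
  have hζv : ζv v (Ψv v w b) = ζb v b := by
    rw [ζv, h1, ΨMv]
    have h2 : ⟪ζb v b - (⟪ζb v b, w⟫ / ⟪vE v, w⟫) • vE v, vE v⟫
        = -(⟪ζb v b, w⟫ / ⟪vE v, w⟫) := by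
      rw [inner_sub_left, real_inner_smul_left, inner_vv v, inner_ζb_v v b]
      ring
    rw [h2]
    module
  rw [Φv, hζv]
  have hproj : Submodule.orthogonalProjection (Kv v) (ζb v b) = (1 - ‖b‖)⁻¹ • (ψv v).symm b := by
    rw [ζb, map_smul]
    congr 1
    exact Submodule.orthogonalProjection_mem_subspace_eq_self _
  have h3 : (1 + ‖ζb v b‖)⁻¹ = 1 - ‖b‖ := by
    rw [norm_ζb v b hb]
    rw [show (1:ℝ) + (1 - ‖b‖)⁻¹ * ‖b‖ = (1 - ‖b‖)⁻¹ from by field_simp; ring, inv_inv]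
  rw [hproj, map_smul, (ψv v).apply_symm_apply, h3, smul_smul,
    mul_inv_cancel₀ (ne_of_gt hb1), one_smul]

lemma Psi_Phi (m w : E n) (hm : ‖m‖ < 1) (hmw : ⟪m, w⟫ = 0) (hw : ⟪vE v, w⟫ ≠ 0) :
    Ψv v w (Φv v m) = m := by
  have hζpos : (0:ℝ) < 1 + ‖ζv v m‖ := by positivity
  have hproj : (Submodule.orthogonalProjection (Kv v) (ζv v m) : Kv v) = ⟨ζv v m, ζv_mem v m⟩ :=
    Submodule.orthogonalProjection_mem_subspace_eq_self ⟨ζv v m, ζv_mem v m⟩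
  have hnorm : ‖(Submodule.orthogonalProjection (Kv v) (ζv v m) : Kv v)‖ = ‖ζv v m‖ := by
    rw [hproj]
    rfl
  have hnb : ‖Φv v m‖ = (1 + ‖ζv v m‖)⁻¹ * ‖ζv v m‖ := by
    rw [Φv, norm_smul, Real.norm_eq_abs, abs_of_pos (inv_pos.mpr hζpos), (ψv v).norm_map,
      hnorm]
  have h4 : 1 - ‖Φv v m‖ = (1 + ‖ζv v m‖)⁻¹ := by
    rw [hnb]; field_simp; ring
  have hζb : ζb v (Φv v m) = ζv v m := by
    rw [ζb, h4, inv_inv, Φv, map_smul, hproj, (ψv v).symm_apply_apply]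
    rw [Submodule.coe_smul, smul_smul, mul_inv_cancel₀ (ne_of_gt hζpos), one_smul]
  have hMw : ⟪Mv m, w⟫ = 0 := by
    rw [Mv, real_inner_smul_left, hmw, mul_zero]
  have hζw : ⟪ζv v m, w⟫ = -(⟪Mv m, vE v⟫ * ⟪vE v, w⟫) := by
    rw [ζv, inner_sub_left, real_inner_smul_left, hMw]
    ring
  have hΨM : ΨMv v w (Φv v m) = Mv m := by
    rw [ΨMv, hζb, hζw, neg_div, neg_smul, sub_neg_eq_add, mul_div_assoc,
      div_self hw, mul_one, ζv]
    module
  rw [Ψv, hΨM, contract_Mv hm]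

/-! ### the open set `U` -/

def Ul : Set (RP n) :=
  {z | Quotient.lift (fun w : Sph n => ⟪vE v, (w : E n)⟫ ≠ 0)
    (by
      rintro a b (h | h)
      · show (⟪vE v, (a : E n)⟫ ≠ 0) = (⟪vE v, (b : E n)⟫ ≠ 0)
        rw [show ((a : E n)) = b from h]
      · show (⟪vE v, (a : E n)⟫ ≠ 0) = (⟪vE v, (b : E n)⟫ ≠ 0)
        rw [show ((a : E n)) = -(b : E n) from h, inner_neg_right, neg_ne_zero]) z}

lemma mem_Ul (w : Sph n) : πS w ∈ Ul v ↔ ⟪vE v, (w : E n)⟫ ≠ 0 := Iff.rfl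

lemma isOpen_Ul : IsOpen (Ul v) := by
  rw [← isQuotientMap_πS.isOpen_preimage]
  have : πS ⁻¹' Ul v = (fun w : Sph n => ⟪vE v, (w : E n)⟫) ⁻¹' ({0}ᶜ) := rfl
  rw [this]
  exact (isOpen_compl_singleton).preimage (Continuous.inner continuous_const
    continuous_subtype_val)

lemma self_mem_Ul : πS v ∈ Ul v := by
  show ⟪vE v, vE v⟫ ≠ 0
  rw [inner_vv v]
  norm_num

/-! ### the inverse chart map -/

def Gmk (w : Sph n) (b : F n) : UConf (↥(Sph n)) 2 := πC (cfg (Ψv v (w : E n) b) (w : E n))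

lemma Gmk_neg (w : Sph n) (b : F n) : Gmk v (negS w) b = Gmk v w b := by
  show πC (cfg (Ψv v (-(w : E n)) b) (-(w : E n))) = _
  rw [Psi_neg]
  exact cfg_neg _ _

def Gv (z : RP n) (b : F n) : UConf (↥(Sph n)) 2 :=
  Quotient.lift (fun w => Gmk v w b)
    (by
      rintro a c (h | h)
      · rw [show a = c from Subtype.ext h]
      · rw [show a = negS c from Subtype.ext h]
        show Gmk v (negS c) b = Gmk v c b
        exact Gmk_neg v c b) z

lemma Gv_mk (w : Sph n) (b : F n) : Gv v (πS w) b = Gmk v w b := rfl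

lemma cfgCond_Psi (w : Sph n) (b : F n) (hw : ⟪vE v, (w : E n)⟫ ≠ 0) :
    CfgCond (Ψv v (w : E n) b) (w : E n) :=
  ⟨sph_norm w, Psi_inner v _ _ hw, Psi_norm_lt v _ _⟩

lemma pmap_Gmk (w : Sph n) (b : F n) (hw : ⟪vE v, (w : E n)⟫ ≠ 0) :
    pmap n (Gmk v w b) = πS w := by
  rw [Gmk, cfg_pos (cfgCond_Psi v w b hw), pmap_mk]
  congr 1
  exact Subtype.ext (dir_cfgAux _)

/-! ### the forward chart map -/

def PhiC : UConf (↥(Sph n)) 2 → F n :=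
  Quotient.lift (fun f => Φv v (midf f))
    (by
      rintro f g ⟨σ, hσ⟩
      rcases eq_or_swap ⟨σ, hσ⟩ with rfl | rfl
      · rfl
      · show Φv v (midf f) = Φv v (midf (swapC f))
        rw [mid_swap])

lemma PhiC_mk (f : Cfg n) : PhiC v (πC f) = Φv v (midf f) := rfl

lemma PhiC_lt (z : UConf (↥(Sph n)) 2) : ‖PhiC v z‖ < 1 := by
  induction z using Quotient.ind with
  | _ f => exact Phi_norm_lt v _

lemma PhiC_Gmk (w : Sph n) (b : F n) (hw : ⟪vE v, (w : E n)⟫ ≠ 0) :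
    PhiC v (Gmk v w b) = Φv v (Ψv v (w : E n) b) := by
  rw [Gmk, cfg_pos (cfgCond_Psi v w b hw), PhiC_mk, mid_cfgAux]

lemma pmap_Gv_mem {z : RP n} (hz : z ∈ Ul v) (b : F n) :
    pmap n (Gv v z b) ∈ Ul v := by
  revert hz
  induction z using Quotient.ind with
  | _ w =>
    intro hz
    show pmap n (Gmk v w b) ∈ Ul v
    rw [pmap_Gmk v w b hz]
    exact hz

/-! ### the chart -/

def chartFwd : {z : UConf (↥(Sph n)) 2 // pmap n z ∈ Ul v} →
    ↥(Ul v) × ↥(Metric.ball (0 : F n) 1) :=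
  fun z => (⟨pmap n z.1, z.2⟩, ⟨PhiC v z.1, mem_ball_zero_iff.mpr (PhiC_lt v z.1)⟩)

def chartInv : ↥(Ul v) × ↥(Metric.ball (0 : F n) 1) →
    {z : UConf (↥(Sph n)) 2 // pmap n z ∈ Ul v} :=
  fun ub => ⟨Gv v ub.1.1 ub.2.1, pmap_Gv_mem v ub.1.2 ub.2.1⟩

lemma chart_left_inv : Function.LeftInverse (chartInv v) (chartFwd v) := by
  rintro ⟨z, hz⟩
  apply Subtype.ext
  revert hz
  induction z using Quotient.ind with
  | _ f =>
    intro hz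
    have hw : ⟪vE v, dir f⟫ ≠ 0 := hz
    show Gv v (pmap n (πC f)) (PhiC v (πC f)) = πC f
    rw [pmap_mk, PhiC_mk, Gv_mk, Gmk]
    show πC (cfg (Ψv v (dir f) (Φv v (midf f))) (dir f)) = πC f
    rw [Psi_Phi v _ _ (norm_mid_lt f) (mid_inner_dir f) hw, cfg_eta]

lemma chart_right_inv : Function.RightInverse (chartInv v) (chartFwd v) := by
  rintro ⟨⟨z, hz⟩, ⟨b, hb⟩⟩
  have hb' : ‖b‖ < 1 := mem_ball_zero_iff.mp hb
  revert hz
  induction z using Quotient.ind with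
  | _ w =>
    intro hz
    have hw : ⟪vE v, (w : E n)⟫ ≠ 0 := hz
    show chartFwd v ⟨Gmk v w b, _⟩ = _
    refine Prod.ext ?_ ?_
    · apply Subtype.ext
      show pmap n (Gmk v w b) = πS w
      exact pmap_Gmk v w b hw
    · apply Subtype.ext
      show PhiC v (Gmk v w b) = b
      rw [PhiC_Gmk v w b hw]
      exact Phi_Psi v _ _ hw hb'

/-! ### continuity of the chart -/

lemma cont_cfgAux {X : Type*} [TopologicalSpace X] {m w : X → E n}
    (hm : Continuous m) (hw : Continuous w) (hcond : ∀ x, CfgCond (m x) (w x)) :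
    Continuous fun x => cfgAux (m x) (w x) (hcond x) := by
  have hrr : Continuous fun x => rr (m x) :=
    Real.continuous_sqrt.comp (continuous_const.sub ((hm.norm).pow 2))
  apply Continuous.subtype_mk
  apply continuous_pi
  intro i
  fin_cases i
  · exact (hm.add (hrr.smul hw)).subtype_mk _
  · exact (hm.sub (hrr.smul hw)).subtype_mk _

section ChartCont

variable (v : Sph n)

lemma cont_Phiv : Continuous fun m : {m : E n // ‖m‖ < 1} => Φv v m.1 := by
  have hmn : Continuous fun m : {m : E n // ‖m‖ < 1} => (m.1 : E n) := continuous_subtype_val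
  have hM : Continuous fun m : {m : E n // ‖m‖ < 1} => Mv m.1 := by
    apply Continuous.fun_smul _ hmn
    exact (continuous_const.fun_sub hmn.norm).inv₀ fun m => ne_of_gt (by
      have := m.2; linarith)
  have hζ : Continuous fun m : {m : E n // ‖m‖ < 1} => ζv v m.1 := by
    apply hM.sub
    exact (hM.inner continuous_const).fun_smul continuous_const
  have hproj : Continuous fun m : {m : E n // ‖m‖ < 1} =>
      Submodule.orthogonalProjection (Kv v) (ζv v m.1) :=
    (Submodule.orthogonalProjection (Kv v)).continuous.comp hζ
  apply Continuous.fun_smul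
  · exact (continuous_const.fun_add hζ.norm).inv₀ fun m => ne_of_gt (by positivity)
  · exact (ψv v).continuous.comp hproj

lemma cont_PhiC : Continuous (PhiC v) := by
  apply Continuous.quotient_lift
  have : (fun f : Cfg n => Φv v (midf f)) =
      (fun m : {m : E n // ‖m‖ < 1} => Φv v m.1) ∘ (fun f => ⟨midf f, norm_mid_lt f⟩) := rfl
  rw [this]
  exact (cont_Phiv v).comp (cont_mid.subtype_mk _)

lemma cont_chartFwd : Continuous (chartFwd v) := by
  apply Continuous.prodMk
  · exact (Continuous.subtype_mk ((cont_pmap n).comp continuous_subtype_val) _)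
  · exact (Continuous.subtype_mk ((cont_PhiC v).comp continuous_subtype_val) _)

def ρS : ↥(πS ⁻¹' (Ul v)) → ↥(Ul v) := fun w => ⟨πS w.1, w.2⟩

lemma ρS_spec : IsQuotientMap (ρS v) ∧ IsOpenMap (ρS v) ∧ Continuous (ρS v) ∧
    Function.Surjective (ρS v) := by
  have h1 : IsOpenMap (ρS v) := by
    have := restrict_isQuotientMap (f := πS (n := n)) cont_πS isOpenMap_πS surjective_πS (Ul v)
    -- reprove openness directly
    intro O hO
    obtain ⟨O', hO', rfl⟩ := isOpen_induced_iff.mp hO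
    rw [isOpen_induced_iff]
    refine ⟨πS '' O', isOpenMap_πS _ hO', ?_⟩
    ext y
    constructor
    · rintro ⟨x, hx1, hx2⟩
      refine ⟨⟨x, ?_⟩, hx1, Subtype.ext hx2⟩
      show πS x ∈ Ul v
      rw [hx2]
      exact y.2
    · rintro ⟨x, hxO, rfl⟩
      exact ⟨x.1, hxO, rfl⟩
  have h2 : Continuous (ρS v) := (cont_πS.comp continuous_subtype_val).subtype_mk _
  have h3 : Function.Surjective (ρS v) := by
    rintro ⟨y, hy⟩
    obtain ⟨x, rfl⟩ := surjective_πS y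
    exact ⟨⟨x, hy⟩, rfl⟩
  exact ⟨h1.isQuotientMap h2 h3, h1, h2, h3⟩

lemma cont_chartInv : Continuous (chartInv v) := by
  obtain ⟨hq, ho, hc, hs⟩ := ρS_spec v
  have hprod : IsQuotientMap (Prod.map (ρS v) (id : ↥(Metric.ball (0 : F n) 1) → _)) :=
    IsOpenMap.isQuotientMap (ho.prodMap IsOpenMap.id)
      (hc.prodMap continuous_id) (hs.prodMap Function.surjective_id)
  rw [hprod.continuous_iff]
  have hwmem : ∀ x : ↥(πS ⁻¹' (Ul v)) × ↥(Metric.ball (0 : F n) 1),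
      ⟪vE v, ((x.1.1 : Sph n) : E n)⟫ ≠ 0 := fun x => x.1.2
  have key : ∀ x : ↥(πS ⁻¹' (Ul v)) × ↥(Metric.ball (0 : F n) 1),
      (chartInv v ∘ Prod.map (ρS v) id) x =
      ⟨πC (cfgAux (Ψv v (x.1.1 : E n) x.2.1) (x.1.1 : E n)
        (cfgCond_Psi v x.1.1 x.2.1 (hwmem x))),
        by rw [← cfg_pos (cfgCond_Psi v x.1.1 x.2.1 (hwmem x))]
           exact pmap_Gv_mem v (show πS x.1.1 ∈ Ul v from x.1.2) x.2.1⟩ := by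
    intro x
    apply Subtype.ext
    show Gv v (πS x.1.1) x.2.1 = πC (cfgAux (Ψv v (x.1.1 : E n) x.2.1) (x.1.1 : E n)
      (cfgCond_Psi v x.1.1 x.2.1 (hwmem x)))
    rw [Gv_mk, Gmk, cfg_pos (cfgCond_Psi v x.1.1 x.2.1 (hwmem x))]
  refine Continuous.congr ?_ (fun x => (key x).symm)
  apply Continuous.subtype_mk
  apply cont_πC.comp
  apply cont_cfgAux _ _ _
  · -- continuity of Ψv
    have hw : Continuous fun x : ↥(πS ⁻¹' (Ul v)) × ↥(Metric.ball (0 : F n) 1) =>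
        ((x.1.1 : Sph n) : E n) :=
      continuous_subtype_val.comp (continuous_subtype_val.comp continuous_fst)
    have hb : Continuous fun x : ↥(πS ⁻¹' (Ul v)) × ↥(Metric.ball (0 : F n) 1) =>
        (x.2.1 : F n) := continuous_subtype_val.comp continuous_snd
    have hbnorm : ∀ x : ↥(πS ⁻¹' (Ul v)) × ↥(Metric.ball (0 : F n) 1), ‖(x.2.1 : F n)‖ < 1 :=
      fun x => mem_ball_zero_iff.mp x.2.2
    have hζb : Continuous fun x : ↥(πS ⁻¹' (Ul v)) × ↥(Metric.ball (0 : F n) 1) =>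
        ζb v x.2.1 := by
      apply Continuous.fun_smul
      · exact (continuous_const.fun_sub hb.norm).inv₀ fun x => ne_of_gt (by
          have := hbnorm x; linarith)
      · exact continuous_subtype_val.comp ((ψv v).symm.continuous.comp hb)
    have hΨM : Continuous fun x : ↥(πS ⁻¹' (Ul v)) × ↥(Metric.ball (0 : F n) 1) =>
        ΨMv v (x.1.1 : E n) x.2.1 := by
      apply hζb.sub
      apply Continuous.fun_smul _ continuous_const
      exact Continuous.div (hζb.inner hw) (Continuous.inner continuous_const hw)
        fun x => hwmem x
    exact Continuous.fun_smul ((continuous_const.fun_add hΨM.norm).inv₀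
      fun x => ne_of_gt (by positivity)) hΨM
  · exact continuous_subtype_val.comp (continuous_subtype_val.comp continuous_fst)

def chartHomeo : {z : UConf (↥(Sph n)) 2 // pmap n z ∈ Ul v} ≃ₜ
    ↥(Ul v) × ↥(Metric.ball (0 : F n) 1) where
  toFun := chartFwd v
  invFun := chartInv v
  left_inv := chart_left_inv v
  right_inv := chart_right_inv v
  continuous_toFun := cont_chartFwd v
  continuous_invFun := cont_chartInv v

end ChartCont

end Chart

/-! ### the homotopy equivalence -/

lemma cfgCond_zero (w : Sph n) : CfgCond (0 : E n) (w : E n) :=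
  ⟨sph_norm w, by simp, by simp⟩

def iMap (n : ℕ) : RP n → UConf (↥(Sph n)) 2 :=
  Quotient.lift (fun w : Sph n => πC (cfg 0 (w : E n)))
    (by
      rintro a b (h | h)
      · rw [show a = b from Subtype.ext h]
      · rw [show a = negS b from Subtype.ext h]
        show πC (cfg 0 (-(b : E n))) = πC (cfg 0 (b : E n))
        exact cfg_neg _ _)

lemma iMap_mk (w : Sph n) : iMap n (πS w) = πC (cfg 0 (w : E n)) := rfl

lemma cont_iMap (n : ℕ) : Continuous (iMap n) := by
  apply Continuous.quotient_lift
  refine Continuous.congr (f := fun w : Sph n => πC (cfgAux 0 (w : E n) (cfgCond_zero w))) ?_ ?_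
  · exact cont_πC.comp (cont_cfgAux continuous_const continuous_subtype_val _)
  · intro w
    rw [cfg_pos (cfgCond_zero w)]

lemma pmap_iMap (n : ℕ) : ∀ z, pmap n (iMap n z) = z := by
  intro z
  induction z using Quotient.ind with
  | _ w =>
    show pmap n (πC (cfg 0 (w : E n))) = πS w
    rw [cfg_pos (cfgCond_zero w), pmap_mk]
    congr 1
    exact Subtype.ext (dir_cfgAux _)

lemma cfgCond_H (t : unitInterval) (f : Cfg n) :
    CfgCond ((1 - (t : ℝ)) • midf f) (dir f) := by
  refine ⟨dir_norm f, ?_, ?_⟩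
  · rw [real_inner_smul_left, mid_inner_dir, mul_zero]
  · rw [norm_smul, Real.norm_eq_abs, abs_of_nonneg (by linarith [t.2.2])]
    have h1 : (1 - (t : ℝ)) ≤ 1 := by linarith [t.2.1]
    have h2 := norm_mid_lt f
    nlinarith [norm_nonneg (midf f), t.2.1, t.2.2]

def Hfun : unitInterval × UConf (↥(Sph n)) 2 → UConf (↥(Sph n)) 2 :=
  fun p => Quotient.lift (fun f : Cfg n => πC (cfg ((1 - (p.1 : ℝ)) • midf f) (dir f)))
    (by
      rintro f g ⟨σ, hσ⟩
      rcases eq_or_swap ⟨σ, hσ⟩ with rfl | rfl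
      · rfl
      · show πC (cfg ((1 - (p.1 : ℝ)) • midf f) (dir f)) =
          πC (cfg ((1 - (p.1 : ℝ)) • midf (swapC f)) (dir (swapC f)))
        rw [mid_swap, dir_swap]
        exact (cfg_neg _ _).symm) p.2

lemma Hfun_mk (t : unitInterval) (f : Cfg n) :
    Hfun (t, πC f) = πC (cfg ((1 - (t : ℝ)) • midf f) (dir f)) := rfl

lemma cont_Hfun : Continuous (Hfun (n := n)) := by
  have hprod : IsQuotientMap (Prod.map (id : unitInterval → unitInterval) (πC (n := n))) :=
    IsOpenMap.isQuotientMap (IsOpenMap.id.prodMap isOpenMap_πC)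
      (continuous_id.prodMap cont_πC) (Function.surjective_id.prodMap surjective_πC)
  rw [hprod.continuous_iff]
  refine Continuous.congr (f := fun p : unitInterval × Cfg n =>
    πC (cfgAux ((1 - (p.1 : ℝ)) • midf p.2) (dir p.2) (cfgCond_H p.1 p.2))) ?_ ?_
  · apply cont_πC.comp
    apply cont_cfgAux
    · exact ((continuous_const.sub (continuous_subtype_val.comp
        continuous_fst)).smul (cont_mid.comp continuous_snd))
    · exact cont_dir.comp continuous_snd
  · intro p
    show _ = Hfun (p.1, πC p.2)
    rw [Hfun_mk, cfg_pos (cfgCond_H p.1 p.2)]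

def pC (n : ℕ) : C(UConf (↥(Sph n)) 2, RP n) := ⟨pmap n, cont_pmap n⟩
def iC (n : ℕ) : C(RP n, UConf (↥(Sph n)) 2) := ⟨iMap n, cont_iMap n⟩

def Hhomotopy : ContinuousMap.Homotopy (ContinuousMap.id (UConf (↥(Sph n)) 2))
    ((iC n).comp (pC n)) where
  toFun := Hfun
  continuous_toFun := cont_Hfun
  map_zero_left z := by
    induction z using Quotient.ind with
    | _ f =>
      show Hfun ((0 : unitInterval), πC f) = πC f
      rw [Hfun_mk]
      rw [show ((1 : ℝ) - ((0 : unitInterval) : ℝ)) • midf f = midf f from by norm_num]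
      exact congrArg πC (cfg_eta f)
  map_one_left z := by
    induction z using Quotient.ind with
    | _ f =>
      show Hfun ((1 : unitInterval), πC f) = iMap n (pmap n (πC f))
      rw [Hfun_mk, pmap_mk, iMap_mk]
      congr 1
      rw [show ((1 : ℝ) - ((1 : unitInterval) : ℝ)) • midf f = (0 : E n) from by norm_num]
      rfl

def homotopyEquiv (n : ℕ) : ContinuousMap.HomotopyEquiv (UConf (↥(Sph n)) 2) (RP n) where
  toFun := pC n
  invFun := iC n
  left_inv := ContinuousMap.Homotopic.symm ⟨Hhomotopy⟩
  right_inv := by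
    have h : (pC n).comp (iC n) = ContinuousMap.id (RP n) := by
      apply ContinuousMap.ext
      intro z
      exact pmap_iMap n z
    rw [h]

end BraidBundle

/-- `B(S^n,2)` is the total space of an open `n`-disc bundle over `ℝP^n`: there is a continuous
projection to `ℝP^n` which is locally trivial with fibre the open unit `n`-ball; in particular
`B(S^n,2)` is homotopy equivalent to `ℝP^n`. -/
theorem braid_space_sphere_two_disc_bundle (n : ℕ) :
    (∃ p : UConf (↥(Metric.sphere (0 : EuclideanSpace ℝ (Fin (n + 1))) 1)) 2 → RP n,
      Continuous p ∧
      ∀ q : RP n, ∃ U : Set (RP n), IsOpen U ∧ q ∈ U ∧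
        ∃ e : {z : UConf (↥(Metric.sphere (0 : EuclideanSpace ℝ (Fin (n + 1))) 1)) 2 // p z ∈ U}
            ≃ₜ ↥U × ↥(Metric.ball (0 : EuclideanSpace ℝ (Fin n)) 1),
          ∀ z, ((e z).1 : RP n) = p z.1) ∧
    Nonempty (ContinuousMap.HomotopyEquiv
      (UConf (↥(Metric.sphere (0 : EuclideanSpace ℝ (Fin (n + 1))) 1)) 2) (RP n)) := by
  refine ⟨⟨BraidBundle.pmap n, BraidBundle.cont_pmap n, ?_⟩, ⟨BraidBundle.homotopyEquiv n⟩⟩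
  intro q
  obtain ⟨v, hv⟩ := Quotient.exists_rep q
  refine ⟨BraidBundle.Ul v, BraidBundle.isOpen_Ul v, ?_,
    ⟨BraidBundle.chartHomeo v, fun z => rfl⟩⟩
  rw [← hv]
  exact BraidBundle.self_mem_Ul v
end
end

section
/- For any non-trivial Young subgroup K = S_{k_1} × ⋯ × S_{k_r} of S_n (i.e. some k_i ≥ 2, Σk_i = n), the quotient (S^1)^{(n)}/K of the n-fold smash of the circle is contractible. -/
noncomputable section

/-- The quotient of the `n`-fold smash power `(S¹)^{(n)}` by a Young subgroup `K ⊆ S_n`: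
we model `(S¹)^{(n)}/K` as the `n`-torus modulo the fat wedge (tuples containing the basepoint
`1`) and the action of `K = {σ | σ preserves the blocks of c}`, for a block function
`c : Fin n → Fin r`. -/
def SmashPowerModYoung (n r : ℕ) (c : Fin n → Fin r) : Type :=
  Quotient (Relation.EqvGen.setoid (fun f g : Fin n → Circle =>
    (∃ σ : Equiv.Perm (Fin n), (∀ i, c (σ i) = c i) ∧ f ∘ σ = g) ∨
    ((∃ i, f i = 1) ∧ (∃ i, g i = 1))))

instance (n r : ℕ) (c : Fin n → Fin r) : TopologicalSpace (SmashPowerModYoung n r c) :=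
  instTopologicalSpaceQuotient

namespace SPMYAux

open Set Function AddCircle

local instance : Fact ((0:ℝ) < 1) := ⟨one_pos⟩

/-- Homeomorphism from `ℝ/ℤ` to the circle. -/
def ee : AddCircle (1:ℝ) ≃ₜ Circle := AddCircle.homeomorphCircle one_ne_zero

lemma ee_zero : ee 0 = 1 := by
  rw [ee, AddCircle.homeomorphCircle_apply, AddCircle.toCircle_zero]

/-- The representative of a circle point in `[b, b+1)`. -/
def rp (b : ℝ) (z : Circle) : ℝ := ((AddCircle.equivIco 1 b (ee.symm z)) : ℝ)

lemma rp_mem (b : ℝ) (z : Circle) : rp b z ∈ Ico b (b+1) :=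
  (AddCircle.equivIco 1 b (ee.symm z)).2

lemma mk_rp (b : ℝ) (z : Circle) : ((rp b z : ℝ) : AddCircle (1:ℝ)) = ee.symm z :=
  (AddCircle.equivIco 1 b).symm_apply_apply (ee.symm z)

lemma ee_mk_rp (b : ℝ) (z : Circle) : ee ((rp b z : ℝ) : AddCircle (1:ℝ)) = z := by
  rw [mk_rp]; exact ee.apply_symm_apply z

lemma rp_eq_of_mem {b s : ℝ} (hs : s ∈ Ico b (b+1)) :
    rp b (ee ((s : ℝ) : AddCircle (1:ℝ))) = s := by
  have h : (AddCircle.equivIco 1 b) ((s : ℝ) : AddCircle (1:ℝ)) = ⟨s, hs⟩ := by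
    rw [Equiv.apply_eq_iff_eq_symm_apply]; rfl
  rw [rp, ee.symm_apply_apply, h]

/-- The canonical representative in `[0,1)`. -/
def ca (z : Circle) : ℝ := rp 0 z

lemma ca_nonneg (z : Circle) : 0 ≤ ca z := (rp_mem 0 z).1
lemma ca_lt_one (z : Circle) : ca z < 1 := by simpa [ca] using (rp_mem 0 z).2

lemma ee_ca (z : Circle) : ee ((ca z : ℝ) : AddCircle (1:ℝ)) = z := ee_mk_rp 0 z

lemma ca_inj {z w : Circle} (h : ca z = ca w) : z = w := by
  rw [← ee_ca z, ← ee_ca w, h]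

lemma ca_eq_of_mem {s : ℝ} (hs : s ∈ Ico (0:ℝ) 1) :
    ca (ee ((s : ℝ) : AddCircle (1:ℝ))) = s := rp_eq_of_mem (by simpa using hs)

lemma ca_one : ca 1 = 0 := by
  have : (1:Circle) = ee (((0:ℝ) : ℝ) : AddCircle (1:ℝ)) := by
    rw [show (((0:ℝ)) : AddCircle (1:ℝ)) = 0 by norm_num, ee_zero]
  rw [this, ca_eq_of_mem (by norm_num)]

lemma ca_eq_zero_iff {z : Circle} : ca z = 0 ↔ z = 1 := by
  constructor
  · intro h
    have := ee_ca z
    rw [h] at this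
    rw [← this]
    simpa using ee_zero
  · rintro rfl; exact ca_one

end SPMYAux

namespace SPMYAux
open Set Function AddCircle

/-- Two closed arcs covering the circle. -/
def Arc (b : Bool) : Set Circle :=
  ee '' ((fun s : ℝ => ((s : ℝ) : AddCircle (1:ℝ))) '' (if b then Icc (0:ℝ) 2⁻¹ else Icc 2⁻¹ 1))

lemma isClosed_arc (b : Bool) : IsClosed (Arc b) := by
  cases b <;>
    exact IsCompact.isClosed
      ((isCompact_Icc.image (AddCircle.continuous_mk' 1)).image ee.continuous)

lemma mem_arc_true {z : Circle} : z ∈ Arc true ↔ ca z ≤ 2⁻¹ := by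
  constructor
  · rintro ⟨x, ⟨s, hs, rfl⟩, rfl⟩
    rw [ca_eq_of_mem ⟨hs.1, lt_of_le_of_lt hs.2 (by norm_num)⟩]
    exact hs.2
  · intro h
    exact ⟨_, ⟨ca z, ⟨ca_nonneg z, h⟩, rfl⟩, ee_ca z⟩

lemma mem_arc_false {z : Circle} : z ∈ Arc false ↔ (ca z = 0 ∨ 2⁻¹ ≤ ca z) := by
  constructor
  · rintro ⟨x, ⟨s, hs, rfl⟩, rfl⟩
    rcases eq_or_lt_of_le hs.2 with h1 | h1
    · left
      subst h1
      show ca (ee (((1:ℝ)) : AddCircle (1:ℝ))) = 0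
      rw [AddCircle.coe_period (p := (1:ℝ)), ee_zero, ca_one]
    · right
      rw [ca_eq_of_mem ⟨le_trans (by norm_num) hs.1, h1⟩]
      exact hs.1
  · rintro (h | h)
    · rw [ca_eq_zero_iff.mp h]
      refine ⟨_, ⟨1, by norm_num, rfl⟩, ?_⟩
      show ee (((1:ℝ)) : AddCircle (1:ℝ)) = 1
      rw [AddCircle.coe_period (p := (1:ℝ)), ee_zero]
    · exact ⟨_, ⟨ca z, ⟨h, le_of_lt (ca_lt_one z)⟩, rfl⟩, ee_ca z⟩

/-- Representative adapted to each arc: continuous on the arc, and equal to `1` (not `0`)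
at the basepoint for the `false` arc. -/
def rep (b : Bool) (z : Circle) : ℝ := if b then rp (-4⁻¹) z else rp 4⁻¹ z

lemma rep_true {z : Circle} (hz : ca z ≤ 2⁻¹) : rep true z = ca z := by
  have : z = ee ((ca z : ℝ) : AddCircle (1:ℝ)) := (ee_ca z).symm
  rw [rep, if_pos rfl, this, rp_eq_of_mem ⟨by linarith [ca_nonneg z], by norm_num; linarith⟩,
    ca_eq_of_mem ⟨ca_nonneg z, ca_lt_one z⟩]

lemma rep_false_of {z : Circle} (hz : 2⁻¹ ≤ ca z) : rep false z = ca z := by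
  have : z = ee ((ca z : ℝ) : AddCircle (1:ℝ)) := (ee_ca z).symm
  rw [rep, if_neg (by simp), this, rp_eq_of_mem ⟨by linarith, by norm_num; linarith [ca_lt_one z]⟩,
    ca_eq_of_mem ⟨ca_nonneg z, ca_lt_one z⟩]

lemma rep_false_one : rep false 1 = 1 := by
  have : (1:Circle) = ee (((1:ℝ)) : AddCircle (1:ℝ)) := by
    rw [AddCircle.coe_period (p := (1:ℝ)), ee_zero]
  rw [rep, if_neg (by simp), this, rp_eq_of_mem ⟨by norm_num, by norm_num⟩]

lemma rep_true_one : rep true 1 = 0 := by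
  rw [rep_true (by rw [ca_one]; norm_num), ca_one]

lemma rep_arc_of_ne_one {b : Bool} {z : Circle} (hz : z ∈ Arc b) (h1 : z ≠ 1) :
    rep b z = ca z := by
  cases b
  · rcases mem_arc_false.mp hz with h | h
    · exact absurd (ca_eq_zero_iff.mp h) h1
    · exact rep_false_of h
  · exact rep_true (mem_arc_true.mp hz)

lemma rep_arc_nonneg {b : Bool} {z : Circle} (hz : z ∈ Arc b) : 0 ≤ rep b z := by
  by_cases h1 : z = 1
  · subst h1; cases b <;> simp [rep_false_one, rep_true_one]
  · rw [rep_arc_of_ne_one hz h1]; exact ca_nonneg z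

lemma rep_arc_le_one {b : Bool} {z : Circle} (hz : z ∈ Arc b) : rep b z ≤ 1 := by
  by_cases h1 : z = 1
  · subst h1; cases b <;> simp [rep_false_one, rep_true_one]
  · rw [rep_arc_of_ne_one hz h1]; exact le_of_lt (ca_lt_one z)

lemma rep_arc_lt_one_of_ne_one {b : Bool} {z : Circle} (hz : z ∈ Arc b) (h1 : z ≠ 1) :
    rep b z < 1 := by
  rw [rep_arc_of_ne_one hz h1]; exact ca_lt_one z

end SPMYAux

namespace SPMYAux
open Set Function AddCircle

lemma continuousAt_rp {b : ℝ} {z : Circle} (h : ee.symm z ≠ ((b : ℝ) : AddCircle (1:ℝ))) :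
    ContinuousAt (rp b) z := by
  have h1 : ContinuousAt (AddCircle.equivIco 1 b) (ee.symm z) :=
    AddCircle.continuousAt_equivIco 1 b h
  exact continuous_subtype_val.continuousAt.comp (h1.comp ee.symm.continuous.continuousAt)

lemma ca_ee_mk {s : ℝ} (hs : s ∈ Ico (0:ℝ) 1) : ca (ee ((s : ℝ) : AddCircle (1:ℝ))) = s :=
  ca_eq_of_mem hs

lemma continuousAt_rep_arc {b : Bool} {z : Circle} (hz : z ∈ Arc b) :
    ContinuousAt (rep b) z := by
  cases b
  · have h : ee.symm z ≠ (((4⁻¹:ℝ)) : AddCircle (1:ℝ)) := by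
      intro hcon
      have : z = ee (((4⁻¹:ℝ)) : AddCircle (1:ℝ)) := by
        rw [← hcon, ee.apply_symm_apply]
      have hca : ca z = 4⁻¹ := by rw [this, ca_eq_of_mem (by norm_num)]
      rcases mem_arc_false.mp hz with h' | h' <;> rw [hca] at h' <;> norm_num at h'
    have := continuousAt_rp h
    convert this using 1; funext w; simp [rep]
  · have h : ee.symm z ≠ (((-4⁻¹:ℝ)) : AddCircle (1:ℝ)) := by
      intro hcon
      have : z = ee (((-4⁻¹:ℝ)) : AddCircle (1:ℝ)) := by
        rw [← hcon, ee.apply_symm_apply]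
      have h34 : ((-4⁻¹:ℝ) : AddCircle (1:ℝ)) = (((3/4 : ℝ)) : AddCircle (1:ℝ)) := by
        rw [show (3/4 : ℝ) = -4⁻¹ + 1 by norm_num, AddCircle.coe_add_period]
      have hca : ca z = 3/4 := by rw [this, h34, ca_eq_of_mem (by norm_num)]
      have := mem_arc_true.mp hz
      rw [hca] at this; norm_num at this
    have := continuousAt_rp h
    convert this using 1; funext w; simp [rep]

end SPMYAux

namespace SPMYAux
open Set Function AddCircle

variable {n r : ℕ} (c : Fin n → Fin r)

/-- The base relation. -/
def Rel (f g : Fin n → Circle) : Prop :=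
  (∃ σ : Equiv.Perm (Fin n), (∀ i, c (σ i) = c i) ∧ f ∘ σ = g) ∨
    ((∃ i, f i = 1) ∧ (∃ i, g i = 1))

variable (i₀ : Fin n)

/-- The block of `i₀`. -/
def Bf : Finset (Fin n) := Finset.univ.filter (fun m => c m = c i₀)

lemma mem_Bf {m : Fin n} : m ∈ Bf c i₀ ↔ c m = c i₀ := by simp [Bf]

lemma exists_argmin (f : Fin n → Circle) :
    ∃ m ∈ Bf c i₀, ∀ m' ∈ Bf c i₀, ca (f m) ≤ ca (f m') :=
  Finset.exists_min_image (Bf c i₀) (fun m => ca (f m)) ⟨i₀, (mem_Bf c i₀).mpr rfl⟩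

/-- A choice of index in the block of `i₀` where `ca ∘ f` is minimal. -/
def am (f : Fin n → Circle) : Fin n := (exists_argmin c i₀ f).choose

lemma am_mem (f : Fin n → Circle) : c (am c i₀ f) = c i₀ :=
  (mem_Bf c i₀).mp (exists_argmin c i₀ f).choose_spec.1

lemma am_min (f : Fin n → Circle) {m : Fin n} (hm : c m = c i₀) :
    ca (f (am c i₀ f)) ≤ ca (f m) :=
  (exists_argmin c i₀ f).choose_spec.2 m ((mem_Bf c i₀).mpr hm)

/-- The deformation at time `t`. -/
def out (t : ℝ) (f : Fin n → Circle) : Fin n → Circle :=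
  Function.update f (am c i₀ f)
    (ee ((((1-t) * ca (f (am c i₀ f))) : ℝ) : AddCircle (1:ℝ)))

lemma out_zero (f : Fin n → Circle) : out c i₀ 0 f = f := by
  rw [out]
  simp only [sub_zero, one_mul, ee_ca]
  exact Function.update_eq_self _ f

lemma out_base {t : ℝ} {f : Fin n → Circle} (h : ∃ m, f m = 1) :
    ∃ m, out c i₀ t f m = 1 := by
  obtain ⟨m, hm⟩ := h
  by_cases hmB : c m = c i₀
  · refine ⟨am c i₀ f, ?_⟩
    have h0 : ca (f (am c i₀ f)) = 0 := by
      have h1 := am_min c i₀ f hmB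
      rw [hm, ca_one] at h1
      exact le_antisymm h1 (ca_nonneg _)
    rw [out, Function.update_self, h0, mul_zero]
    show ee (((0:ℝ)) : AddCircle (1:ℝ)) = 1
    rw [show (((0:ℝ)) : AddCircle (1:ℝ)) = 0 by norm_num, ee_zero]
  · refine ⟨m, ?_⟩
    have hne : m ≠ am c i₀ f := by
      intro he
      exact hmB (he ▸ am_mem c i₀ f)
    rw [out, Function.update_of_ne hne _ f, hm]

lemma out_one (t : ℝ) (f : Fin n → Circle) (ht : t = 1) :
    out c i₀ t f (am c i₀ f) = 1 := by
  subst ht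
  rw [out, Function.update_self]
  show ee ((((1-1) * ca (f (am c i₀ f))) : ℝ) : AddCircle (1:ℝ)) = 1
  rw [show ((1:ℝ)-1) * ca (f (am c i₀ f)) = 0 by ring,
    show (((0:ℝ)) : AddCircle (1:ℝ)) = 0 by norm_num, ee_zero]

end SPMYAux

namespace SPMYAux
open Set Function AddCircle

variable {n r : ℕ} (c : Fin n → Fin r) (i₀ : Fin n)

/-- The quotient space. -/
abbrev XQ := Quotient (Relation.EqvGen.setoid (Rel c))

/-- Quotient map. -/
def qk (f : Fin n → Circle) : XQ c := Quotient.mk _ f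

lemma qk_sound {f g : Fin n → Circle} (h : Rel c f g) : qk c f = qk c g :=
  Quotient.sound (Relation.EqvGen.rel _ _ h)

/-- The homotopy, upstairs. -/
def F (p : ℝ × (Fin n → Circle)) : XQ c := qk c (out c i₀ p.1 p.2)

lemma F_rel (t : ℝ) {f g : Fin n → Circle} (h : Rel c f g) :
    F c i₀ (t, f) = F c i₀ (t, g) := by
  rcases h with ⟨σ, hσ, hfg⟩ | ⟨hf, hg⟩
  · -- permutation case
    subst hfg
    set m₁ := am c i₀ (f ∘ σ) with hm₁
    set m₂ := am c i₀ f with hm₂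
    set s := σ.symm m₂ with hs
    have hσB : ∀ m : Fin n, c m = c i₀ → c (σ m) = c i₀ := fun m hm => by rw [hσ m, hm]
    have hσB' : ∀ m : Fin n, c m = c i₀ → c (σ.symm m) = c i₀ := fun m hm => by
      have := hσ (σ.symm m); rw [σ.apply_symm_apply] at this; rw [← this, hm]
    have hsB : c s = c i₀ := hσB' m₂ (am_mem c i₀ f)
    have hm₁B : c m₁ = c i₀ := am_mem c i₀ (f ∘ σ)
    have hμ : ca ((f ∘ σ) m₁) = ca (f m₂) := by
      apply le_antisymm
      · have h1 := am_min c i₀ (f ∘ σ) (m := σ.symm m₂) (hσB' m₂ (am_mem c i₀ f))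
        simpa [Function.comp, σ.apply_symm_apply] using h1
      · have h2 := am_min c i₀ f (m := σ m₁) (hσB m₁ hm₁B)
        exact h2
    have hval : f (σ m₁) = f m₂ := ca_inj (by simpa [Function.comp] using hμ)
    set v : Circle := ee ((((1-t) * ca (f m₂)) : ℝ) : AddCircle (1:ℝ)) with hv
    have hout_f : out c i₀ t f = Function.update f m₂ v := rfl
    have hout_g : out c i₀ t (f ∘ σ) = Function.update (f ∘ σ) m₁ v := by
      simp only [out, ← hm₁, hμ, hv]
    set τ : Equiv.Perm (Fin n) := σ * Equiv.swap m₁ s with hτ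
    have hcτ : ∀ i, c (τ i) = c i := by
      intro i
      rw [hτ]
      show c (σ (Equiv.swap m₁ s i)) = c i
      rw [hσ]
      rcases eq_or_ne i m₁ with rfl | h1
      · rw [Equiv.swap_apply_left, hsB, hm₁B]
      · rcases eq_or_ne i s with rfl | h2
        · rw [Equiv.swap_apply_right, hm₁B, hsB]
        · rw [Equiv.swap_apply_of_ne_of_ne h1 h2]
    have hcomp : (out c i₀ t f) ∘ τ = out c i₀ t (f ∘ σ) := by
      funext m
      rw [hout_f, hout_g]
      show Function.update f m₂ v (σ (Equiv.swap m₁ s m)) = Function.update (f ∘ σ) m₁ v m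
      rcases eq_or_ne m m₁ with rfl | h1
      · rw [Equiv.swap_apply_left]
        have : σ s = m₂ := σ.apply_symm_apply m₂
        rw [this, Function.update_self, Function.update_self]
      · rw [Function.update_of_ne h1]
        rcases eq_or_ne m s with rfl | h2
        · rw [Equiv.swap_apply_right]
          have hσm₁ : σ m₁ ≠ m₂ := by
            intro he
            apply h1
            have : m₁ = σ.symm m₂ := by rw [← he, σ.symm_apply_apply]
            rw [← hs] at this
            exact this.symm ▸ rfl
          rw [Function.update_of_ne hσm₁]
          show f (σ m₁) = (f ∘ σ) s
          rw [hval]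
          show f m₂ = f (σ (σ.symm m₂))
          rw [σ.apply_symm_apply]
        · rw [Equiv.swap_apply_of_ne_of_ne h1 h2]
          have hσm : σ m ≠ m₂ := by
            intro he
            apply h2
            rw [hs, ← he, σ.symm_apply_apply]
          rw [Function.update_of_ne hσm]
          rfl
    exact qk_sound c (Or.inl ⟨τ, hcτ, hcomp⟩)
  · exact qk_sound c (Or.inr ⟨out_base c i₀ hf, out_base c i₀ hg⟩)

end SPMYAux

namespace SPMYAux
open Set Function AddCircle

variable {n r : ℕ} (c : Fin n → Fin r) (i₀ : Fin n)

/-- The closed pieces on which the homotopy is given by a continuous formula. -/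
def Pc (ε : Fin n → Bool) (m : Fin n) : Set (ℝ × (Fin n → Circle)) :=
  {p | c m = c i₀ ∧ (∀ m', c m' = c i₀ → p.2 m' ∈ Arc (ε m')) ∧
    (∀ m', c m' = c i₀ → rep (ε m) (p.2 m) ≤ rep (ε m') (p.2 m'))}

lemma isClosed_S1 (ε : Fin n → Bool) :
    IsClosed {f : Fin n → Circle | ∀ m', c m' = c i₀ → f m' ∈ Arc (ε m')} := by
  have : {f : Fin n → Circle | ∀ m', c m' = c i₀ → f m' ∈ Arc (ε m')} =
      ⋂ m', {f : Fin n → Circle | c m' = c i₀ → f m' ∈ Arc (ε m')} := by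
    ext f; simp
  rw [this]
  refine isClosed_iInter fun m' => ?_
  by_cases hm' : c m' = c i₀
  · have : {f : Fin n → Circle | c m' = c i₀ → f m' ∈ Arc (ε m')} =
        (fun f : Fin n → Circle => f m') ⁻¹' Arc (ε m') := by
      ext f; simp [hm']
    rw [this]
    exact (isClosed_arc (ε m')).preimage (continuous_apply m')
  · have : {f : Fin n → Circle | c m' = c i₀ → f m' ∈ Arc (ε m')} = univ := by
      ext f; simp [hm']
    rw [this]; exact isClosed_univ

lemma continuousOn_rep_S1 (ε : Fin n → Bool) (m' : Fin n) (hm' : c m' = c i₀) :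
    ContinuousOn (fun f : Fin n → Circle => rep (ε m') (f m'))
      {f : Fin n → Circle | ∀ m'', c m'' = c i₀ → f m'' ∈ Arc (ε m'')} := by
  intro f hf
  have h1 : ContinuousAt (fun g : Fin n → Circle => rep (ε m') (g m')) f :=
    ContinuousAt.comp (f := fun g : Fin n → Circle => g m') (x := f)
      (continuousAt_rep_arc (hf m' hm')) ((continuous_apply m').continuousAt)
  exact h1.continuousWithinAt

lemma isClosed_Pc (ε : Fin n → Bool) (m : Fin n) : IsClosed (Pc c i₀ ε m) := by
  by_cases hm : c m = c i₀
  · have hPc : Pc c i₀ ε m = Prod.snd ⁻¹'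
        (⋂ m', (if c m' = c i₀ then
          ({f : Fin n → Circle | ∀ m'', c m'' = c i₀ → f m'' ∈ Arc (ε m'')} ∩
            {f | 0 ≤ rep (ε m') (f m') - rep (ε m) (f m)})
          else {f : Fin n → Circle | ∀ m'', c m'' = c i₀ → f m'' ∈ Arc (ε m'')})) := by
      ext p
      simp only [Pc, mem_setOf_eq, mem_preimage, mem_iInter]
      constructor
      · rintro ⟨_, h1, h2⟩ m'
        by_cases hm' : c m' = c i₀
        · rw [if_pos hm']
          exact ⟨h1, by simpa using h2 m' hm'⟩
        · rw [if_neg hm']; exact h1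
      · intro h
        refine ⟨hm, ?_, ?_⟩
        · have := h i₀
          rw [if_pos rfl] at this
          exact this.1
        · intro m' hm'
          have := h m'
          rw [if_pos hm'] at this
          have h2' : 0 ≤ rep (ε m') (p.2 m') - rep (ε m) (p.2 m) := this.2
          linarith
    rw [hPc]
    refine IsClosed.preimage continuous_snd (isClosed_iInter fun m' => ?_)
    by_cases hm' : c m' = c i₀
    · rw [if_pos hm']
      have : {f : Fin n → Circle | ∀ m'', c m'' = c i₀ → f m'' ∈ Arc (ε m'')} ∩
          {f | 0 ≤ rep (ε m') (f m') - rep (ε m) (f m)} =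
          {f : Fin n → Circle | ∀ m'', c m'' = c i₀ → f m'' ∈ Arc (ε m'')} ∩
          (fun f : Fin n → Circle => rep (ε m') (f m') - rep (ε m) (f m)) ⁻¹' (Ici 0) := by
        ext f; simp [mem_Ici]
      rw [this]
      refine ContinuousOn.preimage_isClosed_of_isClosed ?_ (isClosed_S1 c i₀ ε) isClosed_Ici
      exact (continuousOn_rep_S1 c i₀ ε m' hm').sub (continuousOn_rep_S1 c i₀ ε m hm)
    · rw [if_neg hm']; exact isClosed_S1 c i₀ ε
  · have : Pc c i₀ ε m = ∅ := by
      ext p; simp [Pc, hm]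
    rw [this]; exact isClosed_empty

lemma cover_Pc : ⋃ (em : (Fin n → Bool) × Fin n), Pc c i₀ em.1 em.2 = univ := by
  refine eq_univ_of_forall fun p => ?_
  set f := p.2 with hf
  set ε : Fin n → Bool := fun m' => decide (ca (f m') ≤ 2⁻¹) with hε
  have harc : ∀ m', f m' ∈ Arc (ε m') := by
    intro m'
    by_cases h : ca (f m') ≤ 2⁻¹
    · have : ε m' = true := by simp [hε, h]
      rw [this]; exact mem_arc_true.mpr h
    · have : ε m' = false := by simp [hε, h]
      rw [this]
      exact mem_arc_false.mpr (Or.inr (le_of_not_ge h))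
  obtain ⟨m, hmB, hmin⟩ := Finset.exists_min_image (Bf c i₀)
    (fun m' => rep (ε m') (f m')) ⟨i₀, (mem_Bf c i₀).mpr rfl⟩
  refine mem_iUnion.mpr ⟨(ε, m), (mem_Bf c i₀).mp hmB, fun m' _ => harc m', fun m' hm' => ?_⟩
  exact hmin m' ((mem_Bf c i₀).mpr hm')

end SPMYAux

namespace SPMYAux
open Set Function AddCircle

variable {n r : ℕ} (c : Fin n → Fin r) (i₀ : Fin n)

/-- The continuous branch formula on the piece `Pc ε m`. -/
def br (ε : Fin n → Bool) (m : Fin n) (p : ℝ × (Fin n → Circle)) : Fin n → Circle :=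
  Function.update p.2 m (ee ((((1 - p.1) * rep (ε m) (p.2 m)) : ℝ) : AddCircle (1:ℝ)))

lemma continuousOn_br (ε : Fin n → Bool) (m : Fin n) :
    ContinuousOn (br ε m) (Pc c i₀ ε m) := by
  intro p hp
  obtain ⟨hm, harc, -⟩ := hp
  have harcm : p.2 m ∈ Arc (ε m) := harc m hm
  have hrep : ContinuousAt (fun q : ℝ × (Fin n → Circle) => rep (ε m) (q.2 m)) p := by
    refine ContinuousAt.comp (f := fun q : ℝ × (Fin n → Circle) => q.2 m) (x := p)
      (continuousAt_rep_arc harcm) ?_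
    exact ((continuous_apply m).comp continuous_snd).continuousAt
  have hval : ContinuousAt (fun q : ℝ × (Fin n → Circle) =>
      ee ((((1 - q.1) * rep (ε m) (q.2 m)) : ℝ) : AddCircle (1:ℝ))) p := by
    refine ContinuousAt.comp (x := p) ee.continuous.continuousAt ?_
    refine ContinuousAt.comp (x := p) (AddCircle.continuous_mk' 1).continuousAt ?_
    exact ((continuous_const.sub continuous_fst).continuousAt).mul hrep
  have : ContinuousAt (br ε m) p := by
    have h2 : ContinuousAt (fun q : (Fin n → Circle) × Circle =>
        Function.update q.1 m q.2) (p.2, ee ((((1 - p.1) * rep (ε m) (p.2 m)) : ℝ) :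
          AddCircle (1:ℝ))) := (continuous_update m).continuousAt
    exact ContinuousAt.comp (x := p) h2 (continuous_snd.continuousAt.prodMk hval)
  exact this.continuousWithinAt

lemma F_eq_br (j₀ : Fin n) (hj₀ : j₀ ≠ i₀) (hcj : c j₀ = c i₀)
    (ε : Fin n → Bool) (m : Fin n) (p : ℝ × (Fin n → Circle))
    (hp : p ∈ Pc c i₀ ε m) : F c i₀ p = qk c (br ε m p) := by
  obtain ⟨hm, harc, hle⟩ := hp
  obtain ⟨t, f⟩ := p
  simp only at harc hle hm ⊢
  by_cases hbp : ∃ m', c m' = c i₀ ∧ f m' = 1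
  · -- basepoint case : both sides are the basepoint
    have hout : ∃ j, out c i₀ t f j = 1 :=
      out_base c i₀ ⟨hbp.choose, hbp.choose_spec.2⟩
    have hbr : ∃ j, br ε m (t, f) j = 1 := by
      by_cases hex : ∃ m'', m'' ≠ m ∧ c m'' = c i₀ ∧ f m'' = 1
      · obtain ⟨m'', hne, -, h1⟩ := hex
        exact ⟨m'', by rw [br, Function.update_of_ne hne]; exact h1⟩
      · obtain ⟨m', hm'B, hm'1⟩ := hbp
        have hfm : f m = 1 := by
          rcases eq_or_ne m' m with rfl | hne
          · exact hm'1
          · exact absurd ⟨m', hne, hm'B, hm'1⟩ hex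
        cases hεm : ε m
        · -- `false` arc : impossible unless a second block coordinate is `1`
          exfalso
          have hj : ∃ j, j ≠ m ∧ c j = c i₀ := by
            rcases eq_or_ne i₀ m with rfl | hne
            · exact ⟨j₀, hj₀, hcj⟩
            · exact ⟨i₀, hne, rfl⟩
          obtain ⟨j, hjm, hjB⟩ := hj
          have hfj : f j ≠ 1 := fun h1 => hex ⟨j, hjm, hjB, h1⟩
          have h1 := hle j hjB
          rw [hεm, hfm, rep_false_one] at h1
          exact absurd (lt_of_le_of_lt h1 (rep_arc_lt_one_of_ne_one (harc j hjB) hfj))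
            (lt_irrefl 1)
        · refine ⟨m, ?_⟩
          rw [br]
          simp only
          rw [Function.update_self, hεm, hfm, rep_true_one, mul_zero]
          show ee (((0:ℝ)) : AddCircle (1:ℝ)) = 1
          rw [show (((0:ℝ)) : AddCircle (1:ℝ)) = 0 by norm_num, ee_zero]
    exact qk_sound c (Or.inr ⟨hout, hbr⟩)
  · -- no basepoint in the block
    push_neg at hbp
    have hrep_eq : ∀ m', c m' = c i₀ → rep (ε m') (f m') = ca (f m') := fun m' hm' =>
      rep_arc_of_ne_one (harc m' hm') (hbp m' hm')
    have ha_min : ∀ m', c m' = c i₀ → ca (f m) ≤ ca (f m') := by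
      intro m' hm'
      have := hle m' hm'
      rwa [hrep_eq m hm, hrep_eq m' hm'] at this
    set m₂ := am c i₀ f with hm₂
    have hca : ca (f m) = ca (f m₂) :=
      le_antisymm (ha_min m₂ (am_mem c i₀ f)) (am_min c i₀ f hm)
    have hval : f m = f m₂ := ca_inj hca
    have hbr_eq : br ε m (t, f) = Function.update f m
        (ee ((((1 - t) * ca (f m₂)) : ℝ) : AddCircle (1:ℝ))) := by
      rw [br]
      simp only
      rw [hrep_eq m hm, hca]
    have hout_eq : out c i₀ t f = Function.update f m₂
        (ee ((((1 - t) * ca (f m₂)) : ℝ) : AddCircle (1:ℝ))) := rfl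
    rcases eq_or_ne m m₂ with rfl | hne
    · rw [F, hbr_eq, hout_eq]
    · set v : Circle := ee ((((1 - t) * ca (f m₂)) : ℝ) : AddCircle (1:ℝ)) with hv
      have hcomp : (out c i₀ t f) ∘ (Equiv.swap m₂ m) = br ε m (t, f) := by
        funext x
        rw [hout_eq, hbr_eq]
        show Function.update f m₂ v (Equiv.swap m₂ m x) = Function.update f m v x
        rcases eq_or_ne x m₂ with rfl | h1
        · rw [Equiv.swap_apply_left, Function.update_of_ne (Ne.symm hne),
            Function.update_of_ne hne, hval]
        · rcases eq_or_ne x m with rfl | h2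
          · rw [Equiv.swap_apply_right, Function.update_self, Function.update_self]
          · rw [Equiv.swap_apply_of_ne_of_ne h1 h2, Function.update_of_ne h1,
              Function.update_of_ne h2]
      have hcτ : ∀ i, c ((Equiv.swap m₂ m) i) = c i := by
        intro i
        rcases eq_or_ne i m₂ with rfl | h1
        · rw [Equiv.swap_apply_left, hm, am_mem c i₀ f]
        · rcases eq_or_ne i m with rfl | h2
          · rw [Equiv.swap_apply_right, hm, am_mem c i₀ f]
          · rw [Equiv.swap_apply_of_ne_of_ne h1 h2]
      exact qk_sound c (Or.inl ⟨Equiv.swap m₂ m, hcτ, hcomp⟩)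

lemma continuous_F (j₀ : Fin n) (hj₀ : j₀ ≠ i₀) (hcj : c j₀ = c i₀) :
    Continuous (F c i₀) := by
  refine (locallyFinite_of_finite (fun em : (Fin n → Bool) × Fin n => Pc c i₀ em.1 em.2)).continuous
    (cover_Pc c i₀) (fun em => isClosed_Pc c i₀ em.1 em.2) (fun em => ?_)
  refine ContinuousOn.congr ?_ (fun p hp => F_eq_br c i₀ j₀ hj₀ hcj em.1 em.2 p hp)
  exact continuous_quotient_mk'.comp_continuousOn (continuousOn_br c i₀ em.1 em.2)

end SPMYAux

namespace SPMYAux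
open Set Function AddCircle unitInterval

variable {n r : ℕ} (c : Fin n → Fin r) (i₀ : Fin n)

theorem contractible_XQ (j₀ : Fin n) (hj₀ : j₀ ≠ i₀) (hcj : c j₀ = c i₀) :
    ContractibleSpace (XQ c) := by
  classical
  -- the homotopy upstairs, as a continuous map
  have hGcont : Continuous (fun q : (Fin n → Circle) × unitInterval =>
      F c i₀ ((q.2 : ℝ), q.1)) := by
    refine (continuous_F c i₀ j₀ hj₀ hcj).comp ?_
    exact (continuous_subtype_val.comp continuous_snd).prodMk continuous_fst
  set G : C((Fin n → Circle) × unitInterval, XQ c) := ⟨_, hGcont⟩ with hG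
  set Gc : C(Fin n → Circle, C(unitInterval, XQ c)) := ContinuousMap.curry G with hGc
  have key : ∀ f g : Fin n → Circle, Relation.EqvGen (Rel c) f g → Gc f = Gc g := by
    intro f g h
    induction h with
    | rel x y hxy => exact ContinuousMap.ext fun t => F_rel c i₀ (t : ℝ) hxy
    | refl x => rfl
    | symm x y _ ih => exact ih.symm
    | trans x y z _ _ ih1 ih2 => exact ih1.trans ih2
  set L : XQ c → C(unitInterval, XQ c) := Quotient.lift Gc key with hL
  have hLcont : Continuous L := Continuous.quotient_lift Gc.continuous key
  have hHcont : Continuous (fun q : unitInterval × XQ c => L q.2 q.1) := by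
    have h1 : Continuous fun q : unitInterval × XQ c => (L q.2, q.1) :=
      (hLcont.comp continuous_snd).prodMk continuous_fst
    exact continuous_eval.comp h1
  set y₀ : XQ c := qk c (fun _ => 1) with hy₀
  have h0 : ∀ x : XQ c, L x 0 = x := by
    refine fun x => Quotient.inductionOn x (fun f => ?_)
    show F c i₀ (((0 : unitInterval) : ℝ), f) = Quotient.mk _ f
    have : ((0 : unitInterval) : ℝ) = 0 := rfl
    rw [this, F, out_zero]
    rfl
  have h1 : ∀ x : XQ c, L x 1 = y₀ := by
    refine fun x => Quotient.inductionOn x (fun f => ?_)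
    show F c i₀ (((1 : unitInterval) : ℝ), f) = y₀
    have : ((1 : unitInterval) : ℝ) = 1 := rfl
    rw [this, F, hy₀]
    exact qk_sound c (Or.inr ⟨⟨am c i₀ f, out_one c i₀ 1 f rfl⟩, ⟨i₀, rfl⟩⟩)
  rw [contractible_iff_id_nullhomotopic]
  refine ⟨y₀, ⟨⟨⟨fun q => L q.2 q.1, hHcont⟩, h0, h1⟩⟩⟩

end SPMYAux


/-- For any non-trivial Young subgroup `K = S_{k₁} × ⋯ × S_{k_r}` of `S_n` (some block has at
least two elements), the quotient `(S¹)^{(n)}/K` of the `n`-fold smash power of the circle is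
contractible. -/
theorem smash_power_mod_young_contractible (n r : ℕ) (c : Fin n → Fin r)
    (hK : ∃ i j : Fin n, i ≠ j ∧ c i = c j) :
    ContractibleSpace (SmashPowerModYoung n r c) := by
  obtain ⟨i₀, j₀, hne, hcc⟩ := hK
  exact SPMYAux.contractible_XQ c i₀ j₀ (Ne.symm hne) hcc.symm
end
end
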